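/- If φ/(2π) ∈ ℚ, cos φ ∈ ℚ, and additionally φ is not an integer multiple of π/2 or of π/3 (equivalently, 2φ/π ∉ ℤ and 3φ/π ∉ ℤ), then a contradiction follows; i.e., no such φ exists. -/

import Mathlib

open Real Polynomial

lemma twocos_int (φ : ℝ) (hφ : ∃ q : ℚ, φ / (2 * π) = q)
    (hcos : ∃ r : ℚ, Real.cos φ = r) : ∃ m : ℤ, (2 * Real.cos φ : ℝ) = m := by
  obtain ⟨q, hq⟩ := hφ
  obtain ⟨r, hr⟩ := hcos
  have hπ : (π : ℝ) ≠ 0 := Real.pi_ne_zero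
  have hφq : φ = 2 * π * q := by field_simp at hq; linarith
  set ζ : ℂ := Complex.exp (φ * Complex.I) with hζ
  have hn : 0 < q.den := q.pos
  have hreal : (q.den : ℝ) * φ = (q.num : ℝ) * (2 * π) := by
    have h1 : ((q : ℝ)) * (q.den : ℝ) = (q.num : ℝ) := by exact_mod_cast Rat.mul_den_eq_num q
    rw [hφq, show (q.den:ℝ)*(2*π*q) = ((q:ℝ)*q.den)*(2*π) by ring, h1]
  have hpow : ζ ^ (q.den : ℕ) = 1 := by
    rw [hζ, ← Complex.exp_nat_mul]
    have key : (q.den : ℂ) * (↑φ * Complex.I) = (q.num : ℂ) * (2 * ↑π * Complex.I) := by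
      have : ((q.den : ℝ) * φ : ℝ) = ((q.num : ℝ) * (2 * π) : ℝ) := hreal
      rw [show (q.den : ℂ) * (↑φ * Complex.I) = ((q.den : ℝ) * φ : ℝ) * Complex.I by push_cast; ring,
        this]
      push_cast; ring
    rw [key]
    exact Complex.exp_int_mul_two_pi_mul_I q.num
  have hζne : ζ ≠ 0 := Complex.exp_ne_zero _
  -- ζ is integral over ℤ
  have hint : IsIntegral ℤ ζ := by
    refine ⟨X ^ (q.den : ℕ) - 1, monic_X_pow_sub_C 1 (by omega : (q.den:ℕ) ≠ 0), ?_⟩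
    simp [hpow]
  have hinv : IsIntegral ℤ ζ⁻¹ := by
    have : ζ⁻¹ = ζ ^ ((q.den : ℕ) - 1) := by
      field_simp
      rw [← pow_succ', show (q.den : ℕ) - 1 + 1 = q.den by omega, hpow]
    rw [this]; exact hint.pow _
  have hsum : IsIntegral ℤ (ζ + ζ⁻¹) := hint.add hinv
  have hcos2 : (ζ + ζ⁻¹ : ℂ) = 2 * Real.cos φ := by
    rw [hζ, ← Complex.exp_neg]
    rw [Complex.ofReal_cos, Complex.cos]
    ring
  have hrat : (ζ + ζ⁻¹ : ℂ) = ((2 * r : ℚ) : ℂ) := by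
    rw [hcos2, hr]; push_cast; ring
  have hint2 : IsIntegral ℤ (2 * r : ℚ) := by
    have := hrat ▸ hsum
    rwa [show ((2 * r : ℚ) : ℂ) = algebraMap ℚ ℂ (2 * r) by norm_cast,
      isIntegral_algebraMap_iff (algebraMap ℚ ℂ).injective] at this
  obtain ⟨m, hm⟩ := IsIntegrallyClosed.isIntegral_iff.mp hint2
  refine ⟨m, ?_⟩
  have hm' : (m : ℚ) = 2 * r := by rw [← hm]; simp
  have : ((m : ℚ) : ℝ) = ((2 * r : ℚ) : ℝ) := by exact_mod_cast hm'
  push_cast at this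
  rw [hr]; linarith

theorem niven_strict (φ : ℝ) (hφ : ∃ q : ℚ, φ / (2 * π) = q)
    (hcos : ∃ r : ℚ, Real.cos φ = r)
    (h2 : ¬ ∃ k : ℤ, 2 * φ / π = k)
    (h3 : ¬ ∃ k : ℤ, 3 * φ / π = k) : False := by
  have hπ : (π : ℝ) ≠ 0 := Real.pi_ne_zero
  obtain ⟨m, hm⟩ := twocos_int φ hφ hcos
  have hb1 := Real.neg_one_le_cos φ
  have hb2 := Real.cos_le_one φ
  have hml : (-2 : ℤ) ≤ m := by exact_mod_cast (by linarith : (-2:ℝ) ≤ m)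
  have hmu : m ≤ 2 := by exact_mod_cast (by linarith : (m:ℝ) ≤ 2)
  have case1 : Real.cos φ = 1 ∨ Real.cos φ = -1 → False := by
    intro h
    obtain ⟨n, hn⟩ := Real.sin_eq_zero_iff.mp (Real.sin_eq_zero_iff_cos_eq.mpr h)
    exact h2 ⟨2 * n, by push_cast; field_simp; linarith⟩
  have case2 : Real.cos φ = 1/2 ∨ Real.cos φ = -(1/2) → False := by
    intro h
    have h3c : Real.cos (3 * φ) = -1 ∨ Real.cos (3 * φ) = 1 := by
      rw [show (3:ℝ) * φ = 3 * φ from rfl, Real.cos_three_mul]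
      rcases h with h | h <;> rw [h] <;> [left; right] <;> norm_num
    obtain ⟨n, hn⟩ := Real.sin_eq_zero_iff.mp (Real.sin_eq_zero_iff_cos_eq.mpr h3c.symm)
    exact h3 ⟨n, by field_simp; linarith⟩
  interval_cases m
  · exact case1 (Or.inr (by push_cast at hm; linarith))
  · exact case2 (Or.inr (by push_cast at hm; linarith))
  · -- cos φ = 0
    obtain ⟨n, hn⟩ := Real.cos_eq_zero_iff.mp (by push_cast at hm; linarith : Real.cos φ = 0)
    exact h2 ⟨2 * n + 1, by push_cast; field_simp; linarith⟩
  · exact case2 (Or.inl (by push_cast at hm; linarith))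
  · exact case1 (Or.inl (by push_cast at hm; linarith))
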